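/- Let φ : ℝ² → ℝ be twice continuously differentiable with compact support contained in the open unit disc D1, and let f = (d⊥)²φ be the symmetric 2-tensor field with components f11 = ∂²φ/∂x2², f12 = −∂²φ/∂x1∂x2, f22 = ∂²φ/∂x1². Then for every x ∈ ℝ²: φ(x) = (1/(2 u2)) ∫₀^∞ Tf(x + s e2) ds = (1/(2 u2)) ∫₀^∞ Mf(x + s e1) ds. -/

import Mathlib

noncomputable section

open MeasureTheory

/-- The divergent beam transform `X_w h (x) = ∫₀^∞ h(x + t w) dt`. -/
def Xbeam (w : ℝ × ℝ) (h : ℝ × ℝ → ℝ) (x : ℝ × ℝ) : ℝ :=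
  ∫ t in Set.Ioi (0 : ℝ), h (x + t • w)

/-- The k-th moment divergent beam transform `X_w^k h (x) = ∫₀^∞ t^k h(x + t w) dt`. -/
def Xmom (k : ℕ) (w : ℝ × ℝ) (h : ℝ × ℝ → ℝ) (x : ℝ × ℝ) : ℝ :=
  ∫ t in Set.Ioi (0 : ℝ), t ^ k * h (x + t • w)

/-- The directional derivative `D_w h = w ⋅ ∇h`. -/
def Dir (w : ℝ × ℝ) (h : ℝ × ℝ → ℝ) (x : ℝ × ℝ) : ℝ :=
  fderiv ℝ h x w

/-- Support contained in the open unit disc `D1`. -/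
def SuppInDisc (h : ℝ × ℝ → ℝ) : Prop :=
  ∀ x : ℝ × ℝ, 1 ≤ x.1 ^ 2 + x.2 ^ 2 → h x = 0

/-- The longitudinal V-line transform. -/
def VlineL (u1 u2 : ℝ) (f11 f12 f22 : ℝ × ℝ → ℝ) : ℝ × ℝ → ℝ :=
  Xbeam (u1, u2) (fun y => u1 ^ 2 * f11 y + 2 * u1 * u2 * f12 y + u2 ^ 2 * f22 y)
    + Xbeam (-u1, u2) (fun y => u1 ^ 2 * f11 y - 2 * u1 * u2 * f12 y + u2 ^ 2 * f22 y)

/-- The transverse V-line transform. -/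
def VlineT (u1 u2 : ℝ) (f11 f12 f22 : ℝ × ℝ → ℝ) : ℝ × ℝ → ℝ :=
  Xbeam (u1, u2) (fun y => u2 ^ 2 * f11 y - 2 * u1 * u2 * f12 y + u1 ^ 2 * f22 y)
    + Xbeam (-u1, u2) (fun y => u2 ^ 2 * f11 y + 2 * u1 * u2 * f12 y + u1 ^ 2 * f22 y)

/-- The mixed V-line transform. -/
def VlineM (u1 u2 : ℝ) (f11 f12 f22 : ℝ × ℝ → ℝ) : ℝ × ℝ → ℝ :=
  Xbeam (u1, u2) (fun y => -(u1 * u2) * f11 y + (u1 ^ 2 - u2 ^ 2) * f12 y + u1 * u2 * f22 y)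
    + Xbeam (-u1, u2) (fun y => u1 * u2 * f11 y + (u1 ^ 2 - u2 ^ 2) * f12 y - u1 * u2 * f22 y)

/-- The k-th moment longitudinal V-line transform. -/
def VlineLk (k : ℕ) (u1 u2 : ℝ) (f11 f12 f22 : ℝ × ℝ → ℝ) : ℝ × ℝ → ℝ :=
  Xmom k (u1, u2) (fun y => u1 ^ 2 * f11 y + 2 * u1 * u2 * f12 y + u2 ^ 2 * f22 y)
    + Xmom k (-u1, u2) (fun y => u1 ^ 2 * f11 y - 2 * u1 * u2 * f12 y + u2 ^ 2 * f22 y)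

/-- The k-th moment transverse V-line transform. -/
def VlineTk (k : ℕ) (u1 u2 : ℝ) (f11 f12 f22 : ℝ × ℝ → ℝ) : ℝ × ℝ → ℝ :=
  Xmom k (u1, u2) (fun y => u2 ^ 2 * f11 y - 2 * u1 * u2 * f12 y + u1 ^ 2 * f22 y)
    + Xmom k (-u1, u2) (fun y => u2 ^ 2 * f11 y + 2 * u1 * u2 * f12 y + u1 ^ 2 * f22 y)

/-- The k-th moment mixed V-line transform. -/
def VlineMk (k : ℕ) (u1 u2 : ℝ) (f11 f12 f22 : ℝ × ℝ → ℝ) : ℝ × ℝ → ℝ :=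
  Xmom k (u1, u2) (fun y => -(u1 * u2) * f11 y + (u1 ^ 2 - u2 ^ 2) * f12 y + u1 * u2 * f22 y)
    + Xmom k (-u1, u2) (fun y => u1 * u2 * f11 y + (u1 ^ 2 - u2 ^ 2) * f12 y - u1 * u2 * f22 y)

/-! ### Auxiliary lemmas -/

lemma clm_eval (L : (ℝ × ℝ) →L[ℝ] ℝ) (a : ℝ × ℝ) :
    L a = a.1 * L (1, 0) + a.2 * L (0, 1) := by
  have h : a = a.1 • ((1:ℝ), (0:ℝ)) + a.2 • ((0:ℝ), (1:ℝ)) := by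
    simp [Prod.ext_iff]
  conv_lhs => rw [h]
  rw [map_add, L.map_smul, L.map_smul, smul_eq_mul, smul_eq_mul]

lemma sq_norm_le (z : ℝ × ℝ) : ‖z‖ ^ 2 ≤ z.1 ^ 2 + z.2 ^ 2 := by
  have hz2 : ‖z‖ = |z.1| ∨ ‖z‖ = |z.2| := by
    rw [Prod.norm_def, Real.norm_eq_abs, Real.norm_eq_abs]
    exact max_choice _ _
  rcases hz2 with h|h <;> rw [h] <;> nlinarith [sq_abs z.1, sq_abs z.2, sq_nonneg z.1, sq_nonneg z.2]

lemma supp_zero_of_big (h : ℝ × ℝ → ℝ) (hs : SuppInDisc h) (y : ℝ × ℝ) (hy : 1 ≤ ‖y‖) :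
    h y = 0 := hs y (by nlinarith [sq_norm_le y])

/-- Fundamental theorem of calculus for the beam transform. -/
lemma beam_ftc (h : ℝ × ℝ → ℝ) (hd : Differentiable ℝ h)
    (hc : Continuous fun y => fderiv ℝ h y) (hs : SuppInDisc h)
    (w : ℝ × ℝ) (hw : w ≠ 0) (x : ℝ × ℝ) :
    ∫ t in Set.Ioi (0 : ℝ), fderiv ℝ h (x + t • w) w = - h x := by
  have hwn : 0 < ‖w‖ := norm_pos_iff.mpr hw
  set T : ℝ := (‖x‖ + 2) / ‖w‖ with hT
  have hT0 : 0 ≤ T := div_nonneg (by positivity) hwn.le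
  have hbig : ∀ t : ℝ, T ≤ t → 2 ≤ ‖x + t • w‖ := by
    intro t ht
    have h1 : ‖t • w‖ ≤ ‖x + t • w‖ + ‖x‖ := by
      calc ‖t • w‖ = ‖(x + t • w) - x‖ := by congr 1; abel
        _ ≤ ‖x + t • w‖ + ‖x‖ := norm_sub_le _ _
    have h2 : ‖t • w‖ = t * ‖w‖ := by
      rw [norm_smul, Real.norm_eq_abs, abs_of_nonneg (le_trans hT0 ht)]
    nlinarith [(div_le_iff₀ hwn).mp ht]
  have hzero : ∀ y : ℝ × ℝ, 1 < ‖y‖ → fderiv ℝ h y = 0 := by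
    intro y hy
    have hopen : IsOpen {z : ℝ × ℝ | 1 < ‖z‖} := isOpen_lt continuous_const continuous_norm
    have hev : h =ᶠ[nhds y] (fun _ => (0:ℝ)) := by
      filter_upwards [hopen.mem_nhds hy] with z hz
      exact supp_zero_of_big h hs z hz.le
    calc fderiv ℝ h y = fderiv ℝ (fun _ => (0:ℝ)) y := hev.fderiv_eq
      _ = 0 := fderiv_const_apply 0
  set F : ℝ → ℝ := fun t => fderiv ℝ h (x + t • w) w with hF
  have hline : ∀ t : ℝ, HasDerivAt (fun s : ℝ => x + s • w) w t := by
    intro t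
    simpa using ((hasDerivAt_id t).smul_const w).const_add x
  have hgder : ∀ t : ℝ, HasDerivAt (fun s => h (x + s • w)) (F t) t := by
    intro t
    exact (hd (x + t • w)).hasFDerivAt.comp_hasDerivAt t (hline t)
  have hFcont : Continuous F := by
    have : Continuous fun t : ℝ => x + t • w := by continuity
    exact ((ContinuousLinearMap.apply ℝ ℝ w).continuous.comp hc).comp this
  have hFzero : ∀ t ∈ Set.Ioi T, F t = 0 := by
    intro t ht
    have : (2:ℝ) ≤ ‖x + t • w‖ := hbig t (le_of_lt ht)
    rw [hF]; simp only
    rw [hzero _ (by linarith)]; rfl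
  have hsplit : Set.Ioc 0 T ∪ Set.Ioi T = Set.Ioi (0:ℝ) := Set.Ioc_union_Ioi_eq_Ioi hT0
  have hint1 : IntegrableOn F (Set.Ioc 0 T) := hFcont.integrableOn_Ioc
  have hint2 : IntegrableOn F (Set.Ioi T) := by
    refine (integrableOn_congr_fun hFzero measurableSet_Ioi).mpr ?_
    simp [integrableOn_zero]
  have hIoi2 : ∫ t in Set.Ioi T, F t = 0 := by
    rw [setIntegral_congr_fun measurableSet_Ioi hFzero]
    simp
  have hIoc : ∫ t in Set.Ioc 0 T, F t = - h x := by
    have hftc : ∫ t in (0:ℝ)..T, F t = h (x + T • w) - h (x + (0:ℝ) • w) := by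
      refine intervalIntegral.integral_eq_sub_of_hasDerivAt (fun t _ => hgder t) ?_
      exact hFcont.intervalIntegrable 0 T
    have hT2 : h (x + T • w) = 0 := supp_zero_of_big h hs _ (by linarith [hbig T le_rfl])
    rw [intervalIntegral.integral_of_le hT0] at hftc
    simpa [hT2] using hftc
  calc ∫ t in Set.Ioi (0:ℝ), F t = ∫ t in Set.Ioc 0 T ∪ Set.Ioi T, F t := by rw [hsplit]
    _ = (∫ t in Set.Ioc 0 T, F t) + ∫ t in Set.Ioi T, F t :=
        setIntegral_union Set.Ioc_disjoint_Ioi_same measurableSet_Ioi hint1 hint2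
    _ = - h x := by rw [hIoc, hIoi2]; ring

section
variable {φ : ℝ × ℝ → ℝ}

lemma gdiff (hφ : ContDiff ℝ 2 φ) (a : ℝ × ℝ) : ContDiff ℝ 1 (fun z => fderiv ℝ φ z a) := by
  have h1 : ContDiff ℝ 1 (fderiv ℝ φ) := hφ.fderiv_right (by norm_num)
  exact (ContinuousLinearMap.apply ℝ ℝ a).contDiff.comp h1

lemma Bsymm (hφ : ContDiff ℝ 2 φ) (y : ℝ × ℝ) (a b : ℝ × ℝ) :
    fderiv ℝ (fun z => fderiv ℝ φ z a) y b = fderiv ℝ (fun z => fderiv ℝ φ z b) y a := by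
  have h1 : ContDiff ℝ 1 (fderiv ℝ φ) := hφ.fderiv_right (by norm_num)
  have hF : HasFDerivAt (fderiv ℝ φ) (fderiv ℝ (fderiv ℝ φ) y) y :=
    ((h1.differentiable one_ne_zero) y).hasFDerivAt
  have e1 : fderiv ℝ (fun z => fderiv ℝ φ z a) y b = fderiv ℝ (fderiv ℝ φ) y b a := by
    have := ((ContinuousLinearMap.apply ℝ ℝ a).hasFDerivAt.comp y hF).fderiv
    calc fderiv ℝ (fun z => fderiv ℝ φ z a) y b
        = fderiv ℝ ((ContinuousLinearMap.apply ℝ ℝ a) ∘ (fderiv ℝ φ)) y b := rfl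
      _ = ((ContinuousLinearMap.apply ℝ ℝ a).comp (fderiv ℝ (fderiv ℝ φ) y)) b := by rw [this]
      _ = fderiv ℝ (fderiv ℝ φ) y b a := rfl
  have e2 : fderiv ℝ (fun z => fderiv ℝ φ z b) y a = fderiv ℝ (fderiv ℝ φ) y a b := by
    have := ((ContinuousLinearMap.apply ℝ ℝ b).hasFDerivAt.comp y hF).fderiv
    calc fderiv ℝ (fun z => fderiv ℝ φ z b) y a
        = fderiv ℝ ((ContinuousLinearMap.apply ℝ ℝ b) ∘ (fderiv ℝ φ)) y a := rfl
      _ = ((ContinuousLinearMap.apply ℝ ℝ b).comp (fderiv ℝ (fderiv ℝ φ) y)) a := by rw [this]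
      _ = fderiv ℝ (fderiv ℝ φ) y a b := rfl
  rw [e1, e2]
  exact (hφ.contDiffAt.isSymmSndFDerivAt (by norm_num)) b a

lemma Bexpand (hφ : ContDiff ℝ 2 φ) (b a y : ℝ × ℝ) :
    fderiv ℝ (fun z => fderiv ℝ φ z b) y a
      = b.1 * a.1 * fderiv ℝ (fun z => fderiv ℝ φ z ((1:ℝ),(0:ℝ))) y ((1:ℝ),(0:ℝ))
      + b.1 * a.2 * fderiv ℝ (fun z => fderiv ℝ φ z ((1:ℝ),(0:ℝ))) y ((0:ℝ),(1:ℝ))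
      + b.2 * a.1 * fderiv ℝ (fun z => fderiv ℝ φ z ((0:ℝ),(1:ℝ))) y ((1:ℝ),(0:ℝ))
      + b.2 * a.2 * fderiv ℝ (fun z => fderiv ℝ φ z ((0:ℝ),(1:ℝ))) y ((0:ℝ),(1:ℝ)) := by
  have hfun : (fun z => fderiv ℝ φ z b)
      = fun z => b.1 * fderiv ℝ φ z ((1:ℝ),(0:ℝ)) + b.2 * fderiv ℝ φ z ((0:ℝ),(1:ℝ)) := by
    funext z
    exact clm_eval (fderiv ℝ φ z) b
  have d1 : DifferentiableAt ℝ (fun z => fderiv ℝ φ z ((1:ℝ),(0:ℝ))) y :=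
    ((gdiff hφ _).differentiable one_ne_zero) y
  have d2 : DifferentiableAt ℝ (fun z => fderiv ℝ φ z ((0:ℝ),(1:ℝ))) y :=
    ((gdiff hφ _).differentiable one_ne_zero) y
  rw [hfun, fderiv_fun_add (d1.const_mul _) (d2.const_mul _), fderiv_const_mul d1, fderiv_const_mul d2]
  have expand1 := clm_eval (fderiv ℝ (fun z => fderiv ℝ φ z ((1:ℝ),(0:ℝ))) y) a
  have expand2 := clm_eval (fderiv ℝ (fun z => fderiv ℝ φ z ((0:ℝ),(1:ℝ))) y) a
  simp only [ContinuousLinearMap.add_apply, ContinuousLinearMap.coe_smul', Pi.smul_apply,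
    smul_eq_mul]
  rw [expand1, expand2]
  ring

lemma supp_fderiv (hφ : ContDiff ℝ 2 φ) (hsupp : SuppInDisc φ) (b : ℝ × ℝ) :
    SuppInDisc (fun z => fderiv ℝ φ z b) := by
  intro y hy
  have hcont : Continuous (fderiv ℝ φ) := hφ.continuous_fderiv two_ne_zero
  have hc : Filter.Tendsto (fun n : ℕ => (1 + 1/(n+1:ℝ)) • y) Filter.atTop (nhds y) := by
    have h1 : Filter.Tendsto (fun n : ℕ => 1 + 1/(n+1:ℝ)) Filter.atTop (nhds 1) := by
      have := tendsto_one_div_add_atTop_nhds_zero_nat (𝕜 := ℝ)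
      simpa using this.const_add 1
    have := h1.smul (tendsto_const_nhds (x := y) (f := Filter.atTop (α := ℕ)))
    simpa using this
  have h0 : ∀ n : ℕ, fderiv ℝ φ ((1 + 1/(n+1:ℝ)) • y) = 0 := by
    intro n
    set c : ℝ := 1 + 1/(n+1:ℝ) with hcdef
    have hc1 : 1 < c := by
      rw [hcdef]
      have : 0 < 1/(n+1:ℝ) := by positivity
      linarith
    have hopen : IsOpen {z : ℝ × ℝ | 1 < z.1 ^ 2 + z.2 ^ 2} := by
      have : Continuous fun z : ℝ × ℝ => z.1 ^ 2 + z.2 ^ 2 := by continuity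
      exact isOpen_lt continuous_const this
    have hmem : (c • y) ∈ {z : ℝ × ℝ | 1 < z.1 ^ 2 + z.2 ^ 2} := by
      simp only [Set.mem_setOf_eq, Prod.smul_fst, Prod.smul_snd, smul_eq_mul]
      nlinarith [mul_le_mul_of_nonneg_left hy (sq_nonneg c), sq_nonneg (c-1), hc1]
    have hev : φ =ᶠ[nhds (c • y)] (fun _ => (0:ℝ)) := by
      filter_upwards [hopen.mem_nhds hmem] with z hz
      exact hsupp z (le_of_lt hz)
    calc fderiv ℝ φ (c • y) = fderiv ℝ (fun _ => (0:ℝ)) (c • y) := hev.fderiv_eq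
      _ = 0 := fderiv_const_apply 0
  have hlim1 : Filter.Tendsto (fun n : ℕ => fderiv ℝ φ ((1 + 1/(n+1:ℝ)) • y))
      Filter.atTop (nhds (fderiv ℝ φ y)) := (hcont.tendsto y).comp hc
  have hlim2 : Filter.Tendsto (fun n : ℕ => fderiv ℝ φ ((1 + 1/(n+1:ℝ)) • y))
      Filter.atTop (nhds 0) := by
    simp only [h0]
    exact tendsto_const_nhds
  have : fderiv ℝ φ y = 0 := tendsto_nhds_unique hlim1 hlim2
  simp [this]

lemma branch (hφ : ContDiff ℝ 2 φ) (hsupp : SuppInDisc φ) (a b : ℝ × ℝ) (ha : a ≠ 0)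
    (y : ℝ × ℝ) :
    Xbeam a (fun z => fderiv ℝ (fun w => fderiv ℝ φ w b) z a) y = - fderiv ℝ φ y b :=
  beam_ftc (fun z => fderiv ℝ φ z b) ((gdiff hφ b).differentiable one_ne_zero)
    ((gdiff hφ b).continuous_fderiv one_ne_zero) (supp_fderiv hφ hsupp b) a ha y

end

/-- reconstruction of a potential `φ` with `f = (d⊥)²φ` from `Tf` or `Mf`. -/
theorem recover_potential_dperp2
    (u1 u2 : ℝ) (hu : u1 ^ 2 + u2 ^ 2 = 1) (hu1 : 0 < u1) (hu2 : 0 < u2)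
    (φ : ℝ × ℝ → ℝ) (hφ : ContDiff ℝ 2 φ) (hsupp : SuppInDisc φ)
    (f11 f12 f22 : ℝ × ℝ → ℝ)
    (hf11 : ∀ y : ℝ × ℝ, f11 y =
      fderiv ℝ (fun z => fderiv ℝ φ z ((0 : ℝ), (1 : ℝ))) y ((0 : ℝ), (1 : ℝ)))
    (hf12 : ∀ y : ℝ × ℝ, f12 y =
      -fderiv ℝ (fun z => fderiv ℝ φ z ((0 : ℝ), (1 : ℝ))) y ((1 : ℝ), (0 : ℝ)))
    (hf22 : ∀ y : ℝ × ℝ, f22 y =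
      fderiv ℝ (fun z => fderiv ℝ φ z ((1 : ℝ), (0 : ℝ))) y ((1 : ℝ), (0 : ℝ)))
    (x : ℝ × ℝ) :
    φ x = (1 / (2 * u2)) * Xbeam ((0 : ℝ), (1 : ℝ)) (VlineT u1 u2 f11 f12 f22) x ∧
    φ x = (1 / (2 * u2)) * Xbeam ((1 : ℝ), (0 : ℝ)) (VlineM u1 u2 f11 f12 f22) x := by
  have hu₀ : ((u1, u2) : ℝ × ℝ) ≠ 0 := by
    intro h; rw [Prod.ext_iff] at h; exact absurd h.1 (ne_of_gt hu1)
  have hv₀ : ((-u1, u2) : ℝ × ℝ) ≠ 0 := by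
    intro h; rw [Prod.ext_iff] at h; exact absurd h.2 (ne_of_gt hu2)
  have he2 : (((0:ℝ), (1:ℝ)) : ℝ × ℝ) ≠ 0 := by
    intro h; rw [Prod.ext_iff] at h; exact one_ne_zero h.2
  have he1 : (((1:ℝ), (0:ℝ)) : ℝ × ℝ) ≠ 0 := by
    intro h; rw [Prod.ext_iff] at h; exact one_ne_zero h.1
  have hu2' : u2 ≠ 0 := ne_of_gt hu2
  -- pointwise identity for `VlineT`
  have hT : ∀ y : ℝ × ℝ, VlineT u1 u2 f11 f12 f22 y
      = -(2*u2) * fderiv ℝ φ y ((0:ℝ),(1:ℝ)) := by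
    intro y
    have hI1 : (fun z => u2 ^ 2 * f11 z - 2 * u1 * u2 * f12 z + u1 ^ 2 * f22 z)
        = fun z => fderiv ℝ (fun w => fderiv ℝ φ w ((u1, u2) : ℝ × ℝ)) z ((u1, u2) : ℝ × ℝ) := by
      funext z
      rw [hf11 z, hf12 z, hf22 z, Bexpand hφ ((u1, u2) : ℝ × ℝ) ((u1, u2) : ℝ × ℝ) z,
        Bsymm hφ z ((1:ℝ),(0:ℝ)) ((0:ℝ),(1:ℝ))]
      simp only []
      ring
    have hI2 : (fun z => u2 ^ 2 * f11 z + 2 * u1 * u2 * f12 z + u1 ^ 2 * f22 z)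
        = fun z => fderiv ℝ (fun w => fderiv ℝ φ w ((-u1, u2) : ℝ × ℝ)) z ((-u1, u2) : ℝ × ℝ) := by
      funext z
      rw [hf11 z, hf12 z, hf22 z, Bexpand hφ ((-u1, u2) : ℝ × ℝ) ((-u1, u2) : ℝ × ℝ) z,
        Bsymm hφ z ((1:ℝ),(0:ℝ)) ((0:ℝ),(1:ℝ))]
      simp only []
      ring
    have h1 := branch hφ hsupp ((u1, u2) : ℝ × ℝ) ((u1, u2) : ℝ × ℝ) hu₀ y
    have h2 := branch hφ hsupp ((-u1, u2) : ℝ × ℝ) ((-u1, u2) : ℝ × ℝ) hv₀ y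
    have hval : VlineT u1 u2 f11 f12 f22 y
        = Xbeam (u1, u2) (fun z => u2 ^ 2 * f11 z - 2 * u1 * u2 * f12 z + u1 ^ 2 * f22 z) y
          + Xbeam (-u1, u2) (fun z => u2 ^ 2 * f11 z + 2 * u1 * u2 * f12 z + u1 ^ 2 * f22 z) y := rfl
    rw [hval, hI1, hI2, h1, h2, clm_eval (fderiv ℝ φ y) ((u1, u2) : ℝ × ℝ),
      clm_eval (fderiv ℝ φ y) ((-u1, u2) : ℝ × ℝ)]
    simp only []
    ring
  -- pointwise identity for `VlineM`
  have hM : ∀ y : ℝ × ℝ, VlineM u1 u2 f11 f12 f22 y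
      = -(2*u2) * fderiv ℝ φ y ((1:ℝ),(0:ℝ)) := by
    intro y
    have hI1 : (fun z => -(u1 * u2) * f11 z + (u1 ^ 2 - u2 ^ 2) * f12 z + u1 * u2 * f22 z)
        = fun z => fderiv ℝ (fun w => fderiv ℝ φ w ((u2, -u1) : ℝ × ℝ)) z ((u1, u2) : ℝ × ℝ) := by
      funext z
      rw [hf11 z, hf12 z, hf22 z, Bexpand hφ ((u2, -u1) : ℝ × ℝ) ((u1, u2) : ℝ × ℝ) z,
        Bsymm hφ z ((1:ℝ),(0:ℝ)) ((0:ℝ),(1:ℝ))]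
      simp only []
      ring
    have hI2 : (fun z => u1 * u2 * f11 z + (u1 ^ 2 - u2 ^ 2) * f12 z - u1 * u2 * f22 z)
        = fun z => fderiv ℝ (fun w => fderiv ℝ φ w ((u2, u1) : ℝ × ℝ)) z ((-u1, u2) : ℝ × ℝ) := by
      funext z
      rw [hf11 z, hf12 z, hf22 z, Bexpand hφ ((u2, u1) : ℝ × ℝ) ((-u1, u2) : ℝ × ℝ) z,
        Bsymm hφ z ((1:ℝ),(0:ℝ)) ((0:ℝ),(1:ℝ))]
      simp only []
      ring
    have h1 := branch hφ hsupp ((u1, u2) : ℝ × ℝ) ((u2, -u1) : ℝ × ℝ) hu₀ y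
    have h2 := branch hφ hsupp ((-u1, u2) : ℝ × ℝ) ((u2, u1) : ℝ × ℝ) hv₀ y
    have hval : VlineM u1 u2 f11 f12 f22 y
        = Xbeam (u1, u2) (fun z => -(u1 * u2) * f11 z + (u1 ^ 2 - u2 ^ 2) * f12 z + u1 * u2 * f22 z) y
          + Xbeam (-u1, u2) (fun z => u1 * u2 * f11 z + (u1 ^ 2 - u2 ^ 2) * f12 z - u1 * u2 * f22 z) y := rfl
    rw [hval, hI1, hI2, h1, h2, clm_eval (fderiv ℝ φ y) ((u2, -u1) : ℝ × ℝ),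
      clm_eval (fderiv ℝ φ y) ((u2, u1) : ℝ × ℝ)]
    simp only []
    ring
  have hbeamφ : ∀ w : ℝ × ℝ, w ≠ 0 →
      ∫ t in Set.Ioi (0 : ℝ), fderiv ℝ φ (x + t • w) w = - φ x :=
    fun w hw => beam_ftc φ (hφ.differentiable two_ne_zero) (hφ.continuous_fderiv two_ne_zero)
      hsupp w hw x
  constructor
  · have houter : Xbeam ((0:ℝ),(1:ℝ)) (VlineT u1 u2 f11 f12 f22) x = 2 * u2 * φ x := by
      have hfun : (fun s : ℝ => VlineT u1 u2 f11 f12 f22 (x + s • ((0:ℝ),(1:ℝ))))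
          = fun s => -(2*u2) * fderiv ℝ φ (x + s • ((0:ℝ),(1:ℝ))) ((0:ℝ),(1:ℝ)) :=
        funext fun s => hT _
      calc Xbeam ((0:ℝ),(1:ℝ)) (VlineT u1 u2 f11 f12 f22) x
          = ∫ s in Set.Ioi (0:ℝ), -(2*u2) * fderiv ℝ φ (x + s • ((0:ℝ),(1:ℝ))) ((0:ℝ),(1:ℝ)) := by
            unfold Xbeam; rw [hfun]
        _ = -(2*u2) * ∫ s in Set.Ioi (0:ℝ), fderiv ℝ φ (x + s • ((0:ℝ),(1:ℝ))) ((0:ℝ),(1:ℝ)) :=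
            integral_const_mul _ _
        _ = 2 * u2 * φ x := by rw [hbeamφ _ he2]; ring
    rw [houter]; field_simp
  · have houter : Xbeam ((1:ℝ),(0:ℝ)) (VlineM u1 u2 f11 f12 f22) x = 2 * u2 * φ x := by
      have hfun : (fun s : ℝ => VlineM u1 u2 f11 f12 f22 (x + s • ((1:ℝ),(0:ℝ))))
          = fun s => -(2*u2) * fderiv ℝ φ (x + s • ((1:ℝ),(0:ℝ))) ((1:ℝ),(0:ℝ)) :=
        funext fun s => hM _
      calc Xbeam ((1:ℝ),(0:ℝ)) (VlineM u1 u2 f11 f12 f22) x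
          = ∫ s in Set.Ioi (0:ℝ), -(2*u2) * fderiv ℝ φ (x + s • ((1:ℝ),(0:ℝ))) ((1:ℝ),(0:ℝ)) := by
            unfold Xbeam; rw [hfun]
        _ = -(2*u2) * ∫ s in Set.Ioi (0:ℝ), fderiv ℝ φ (x + s • ((1:ℝ),(0:ℝ))) ((1:ℝ),(0:ℝ)) :=
            integral_const_mul _ _
        _ = 2 * u2 * φ x := by rw [hbeamφ _ he1]; ring
    rw [houter]; field_simp
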